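/- Under Assumptions 1–3 on the model, assume in addition there are no forceful agents, i.e., α_ij = 0 for all i, j. Then, with probability one, lim_{k→∞} x_i(k) = (1/n) Σ_{j=1}^n x_j(0) for every agent i; that is, all beliefs converge to the average of the initial beliefs. -/

import Mathlib

open MeasureTheory ProbabilityTheory Matrix Filter

noncomputable section

instance matMeas {n : ℕ} : MeasurableSpace (Matrix (Fin n) (Fin n) ℝ) := MeasurableSpace.pi

/-- the standard basis vector `e_i`. -/
def eVec {n : ℕ} (i : Fin n) : Fin n → ℝ := fun k => if k = i then 1 else 0

/-- `A_{ij} = I − (e_i−e_j)(e_i−e_j)ᵀ/2` : pairwise averaging matrix. -/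
def Amat {n : ℕ} (i j : Fin n) : Matrix (Fin n) (Fin n) ℝ :=
  1 - (2⁻¹ : ℝ) • Matrix.vecMulVec (eVec i - eVec j) (eVec i - eVec j)

/-- `J_{ij} = I − (1−ε) e_i (e_i−e_j)ᵀ` : influence matrix. -/
def Jmat {n : ℕ} (ε : ℝ) (i j : Fin n) : Matrix (Fin n) (Fin n) ℝ :=
  1 - (1 - ε) • Matrix.vecMulVec (eVec i) (eVec i - eVec j)

/-- the common law of the update matrices `W(k)` : with probability
`p_ij β_ij / n` it is `A_ij`, with probability `p_ij α_ij / n` it is `J_ij`,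
and with probability `Σ_{i,j} p_ij γ_ij / n` it is the identity. -/
def lawW {n : ℕ} (p α β γ : Fin n → Fin n → ℝ) (ε : ℝ) : Measure (Matrix (Fin n) (Fin n) ℝ) :=
  ∑ i, ∑ j,
    (ENNReal.ofReal (p i j * β i j / n) • Measure.dirac (Amat i j) +
     ENNReal.ofReal (p i j * α i j / n) • Measure.dirac (Jmat ε i j) +
     ENNReal.ofReal (p i j * γ i j / n) • Measure.dirac (1 : Matrix (Fin n) (Fin n) ℝ))

/-- `isPath E i j L` : there is a directed path of length `L` from `i` to `j`. -/
def isPath {n : ℕ} (E : Fin n → Fin n → Prop) (i j : Fin n) (L : ℕ) : Prop :=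
  ∃ f : ℕ → Fin n, f 0 = i ∧ f L = j ∧ ∀ l < L, E (f l) (f (l + 1))

/- ### Auxiliary material -/

instance matSingleton {n : ℕ} : MeasurableSingletonClass (Matrix (Fin n) (Fin n) ℝ) :=
  Pi.instMeasurableSingletonClass

lemma measurable_entry {n : ℕ} (k l : Fin n) :
    Measurable (fun M : Matrix (Fin n) (Fin n) ℝ => M k l) :=
  (measurable_pi_apply l).comp (measurable_pi_apply k)

lemma measurable_mulVec_pair {n : ℕ} :
    Measurable (fun z : (Fin n → ℝ) × Matrix (Fin n) (Fin n) ℝ => z.2 *ᵥ z.1) := by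
  apply measurable_pi_lambda
  intro k
  have : (fun z : (Fin n → ℝ) × Matrix (Fin n) (Fin n) ℝ => (z.2 *ᵥ z.1) k)
      = fun z => ∑ l, z.2 k l * z.1 l := by
    funext z; simp [Matrix.mulVec, dotProduct]
  rw [this]
  apply Finset.measurable_sum
  intro l _
  exact ((measurable_entry k l).comp measurable_snd).mul
    ((measurable_pi_apply l).comp measurable_fst)

/-- iterated products applied to x0 -/
def iterProd {n : ℕ} (x0 : Fin n → ℝ) (f : ℕ → Matrix (Fin n) (Fin n) ℝ) : ℕ → Fin n → ℝ
  | 0 => x0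
  | (k+1) => f k *ᵥ iterProd x0 f k

lemma measurable_iterProd {n : ℕ} (x0 : Fin n → ℝ) (k : ℕ) :
    Measurable (fun f : ℕ → Matrix (Fin n) (Fin n) ℝ => iterProd x0 f k) := by
  induction k with
  | zero => exact measurable_const
  | succ m ih =>
    have : (fun f : ℕ → Matrix (Fin n) (Fin n) ℝ => iterProd x0 f (m+1))
        = (fun z : (Fin n → ℝ) × Matrix (Fin n) (Fin n) ℝ => z.2 *ᵥ z.1)
          ∘ (fun f => (iterProd x0 f m, f m)) := by
      funext f; simp [iterProd]
    rw [this]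
    exact measurable_mulVec_pair.comp (ih.prodMk (measurable_pi_apply m))

lemma iterProd_congr {n : ℕ} (x0 : Fin n → ℝ) (k : ℕ)
    (f g : ℕ → Matrix (Fin n) (Fin n) ℝ) (h : ∀ i < k, f i = g i) :
    iterProd x0 f k = iterProd x0 g k := by
  induction k with
  | zero => rfl
  | succ m ih =>
    simp only [iterProd]
    rw [ih (fun i hi => h i (by omega)), h m (by omega)]

lemma Amat_mulVec {n : ℕ} (i j : Fin n) (v : Fin n → ℝ) (k : Fin n) :
    (Amat i j *ᵥ v) k
      = v k - ((v i - v j)/2) * ((if k = i then (1:ℝ) else 0) - (if k = j then 1 else 0)) := by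
  simp only [Amat, Matrix.sub_mulVec, Matrix.one_mulVec, Matrix.smul_mulVec,
    Pi.sub_apply, Pi.smul_apply, smul_eq_mul]
  have : (Matrix.vecMulVec (eVec i - eVec j) (eVec i - eVec j) *ᵥ v) k
      = ((eVec i - eVec j) k) * ((eVec i - eVec j) ⬝ᵥ v) := by
    simp [Matrix.mulVec, Matrix.vecMulVec_apply, dotProduct, Finset.mul_sum, mul_assoc]
  rw [this]
  have hdot : (eVec i - eVec j) ⬝ᵥ v = v i - v j := by
    simp [dotProduct, eVec, sub_mul, Finset.sum_sub_distrib, ite_mul]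
  rw [hdot]
  simp [eVec]
  ring

/-- sum preserved -/
lemma sum_Amat_mulVec {n : ℕ} (i j : Fin n) (v : Fin n → ℝ) :
    ∑ k, (Amat i j *ᵥ v) k = ∑ k, v k := by
  simp only [Amat_mulVec]
  rw [Finset.sum_sub_distrib, ← Finset.mul_sum]
  simp [Finset.sum_sub_distrib]

def Vfun {n : ℕ} (c : ℝ) (v : Fin n → ℝ) : ℝ := ∑ k, (v k - c)^2

lemma Vfun_nonneg {n : ℕ} (c : ℝ) (v : Fin n → ℝ) : 0 ≤ Vfun c v :=
  Finset.sum_nonneg fun k _ => sq_nonneg _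

lemma Vfun_Amat {n : ℕ} (c : ℝ) (i j : Fin n) (v : Fin n → ℝ) :
    Vfun c (Amat i j *ᵥ v) = Vfun c v - (v i - v j)^2 / 2 := by
  rcases eq_or_ne i j with rfl | hij
  · simp [Vfun, Amat_mulVec]
  · unfold Vfun
    simp only [Amat_mulVec]
    set d := v i - v j with hd
    have key : ∀ k, (v k - ((d)/2) * ((if k = i then (1:ℝ) else 0) - (if k = j then 1 else 0)) - c)^2
        = (v k - c)^2 - d * (((if k = i then (1:ℝ) else 0) - (if k = j then 1 else 0)) * (v k - c))
          + (d/2)^2 * ((if k = i then (1:ℝ) else 0) + (if k = j then 1 else 0)) := by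
      intro k
      rcases eq_or_ne k i with rfl | hki
      · simp [hij, if_neg (by simpa using hij)]; ring
      · rcases eq_or_ne k j with rfl | hkj
        · simp [if_neg hki, Ne.symm hij]; ring
        · simp [if_neg hki, if_neg hkj]
    simp only [key]
    rw [Finset.sum_add_distrib, Finset.sum_sub_distrib, ← Finset.mul_sum, ← Finset.mul_sum]
    have h1 : ∑ k, (((if k = i then (1:ℝ) else 0) - (if k = j then 1 else 0)) * (v k - c)) = d := by
      simp [sub_mul, Finset.sum_sub_distrib, ite_mul, hd]
    have h2 : ∑ k, ((if k = i then (1:ℝ) else 0) + (if k = j then 1 else 0)) = 2 := by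
      simp [Finset.sum_add_distrib]; norm_num
    rw [h1, h2]; ring

lemma Vfun_measurable {n : ℕ} (c : ℝ) : Measurable (fun v : Fin n → ℝ => Vfun c v) := by
  unfold Vfun
  exact Finset.measurable_sum _ fun k _ =>
    (by fun_prop)

lemma gap_lemma {n : ℕ} (hn : 2 ≤ n) (q : Fin n → Fin n → ℝ) (hq : ∀ i j, 0 ≤ q i j)
    (hconn : ∀ i j : Fin n, ∃ L, isPath (fun a b => 0 < q a b) i j L) :
    ∃ lam : ℝ, 0 < lam ∧ lam ≤ 1 ∧ ∀ u : Fin n → ℝ, (∑ k, u k) = 0 →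
      lam * (∑ k, (u k)^2) ≤ ∑ i, ∑ j, q i j * (u i - u j)^2 := by
  classical
  set Q : (Fin n → ℝ) → ℝ := fun u => ∑ i, ∑ j, q i j * (u i - u j)^2 with hQ
  have hQcont : Continuous Q := by
    apply continuous_finset_sum; intro i _; apply continuous_finset_sum; intro j _
    fun_prop
  have hQnonneg : ∀ u, 0 ≤ Q u := by
    intro u; apply Finset.sum_nonneg; intro i _; apply Finset.sum_nonneg; intro j _
    exact mul_nonneg (hq i j) (sq_nonneg _)
  set K : Set (Fin n → ℝ) := {u | (∑ k, u k) = 0 ∧ (∑ k, (u k)^2) = 1} with hK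
  have hKclosed : IsClosed K := by
    have h1 : IsClosed {u : Fin n → ℝ | (∑ k, u k) = 0} :=
      isClosed_eq (by fun_prop) continuous_const
    have h2 : IsClosed {u : Fin n → ℝ | (∑ k, (u k)^2) = 1} :=
      isClosed_eq (by fun_prop) continuous_const
    exact h1.inter h2
  have hKbdd : Bornology.IsBounded K := by
    apply Bornology.IsBounded.subset (Metric.isBounded_closedBall (x := (0 : Fin n → ℝ)) (r := 1))
    intro u hu
    simp only [Metric.mem_closedBall, dist_zero_right]
    rw [pi_norm_le_iff_of_nonneg (by norm_num)]
    intro k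
    have h1 : (u k)^2 ≤ 1 := by
      rw [← hu.2]
      exact Finset.single_le_sum (f := fun k => (u k)^2) (fun k _ => sq_nonneg _) (Finset.mem_univ k)
    rw [Real.norm_eq_abs, abs_le_one_iff_mul_self_le_one, ← sq]
    exact h1
  have hKcompact : IsCompact K := Metric.isCompact_of_isClosed_isBounded hKclosed hKbdd
  -- K nonempty
  have h01 : (0 : ℕ) < n := by omega
  have h11 : (1 : ℕ) < n := by omega
  set a : Fin n := ⟨0, h01⟩
  set b : Fin n := ⟨1, h11⟩
  have hab : a ≠ b := by simp [a, b, Fin.ext_iff]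
  set s : ℝ := (Real.sqrt 2)⁻¹
  have hs2 : s^2 = 2⁻¹ := by
    rw [inv_pow, Real.sq_sqrt (by norm_num)]
  set u0 : Fin n → ℝ := fun k => if k = a then s else if k = b then -s else 0 with hu0
  have hu0split : ∀ k, u0 k = (if k = a then s else 0) + (if k = b then -s else 0) := by
    intro k
    rcases eq_or_ne k a with hka | hka
    · have hkb : k ≠ b := by rw [hka]; exact hab
      simp [hu0, hka, hkb, hab, Ne.symm hab]
    · simp [hu0, hka]
  have hu0K : u0 ∈ K := by
    constructor
    · simp only [hu0split]
      rw [Finset.sum_add_distrib]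
      simp
    · have : ∀ k, (u0 k)^2 = (if k = a then s^2 else 0) + (if k = b then s^2 else 0) := by
        intro k
        rcases eq_or_ne k a with hka | hka
        · have hkb : k ≠ b := by rw [hka]; exact hab
          simp [hu0, hka, hkb, hab, Ne.symm hab]
        · rcases eq_or_ne k b with hkb | hkb
          · simp [hu0, hka, hkb, hab, Ne.symm hab]
          · simp [hu0, hka, hkb, hab, Ne.symm hab]
      simp only [this]
      rw [Finset.sum_add_distrib]
      simp [hs2]
      norm_num
  have hKne : K.Nonempty := ⟨u0, hu0K⟩
  obtain ⟨w, hwK, hwmin⟩ := hKcompact.exists_isMinOn hKne hQcont.continuousOn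
  set lam0 : ℝ := Q w with hlam0
  have hlam0pos : 0 < lam0 := by
    rcases lt_or_eq_of_le (hQnonneg w) with h | h
    · exact h
    -- Q w = 0 leads to contradiction
    exfalso
    have hzero : ∀ i j, 0 < q i j → w i = w j := by
      intro i j hqij
      have hterm : ∀ i ∈ Finset.univ, (0:ℝ) ≤ ∑ j, q i j * (w i - w j)^2 := by
        intro i _; apply Finset.sum_nonneg; intro j _; exact mul_nonneg (hq i j) (sq_nonneg _)
      have h0 : ∑ i, ∑ j, q i j * (w i - w j)^2 = 0 := h.symm
      have hi0 : ∑ j, q i j * (w i - w j)^2 = 0 :=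
        (Finset.sum_eq_zero_iff_of_nonneg hterm).mp h0 i (Finset.mem_univ i)
      have hij0 : q i j * (w i - w j)^2 = 0 :=
        (Finset.sum_eq_zero_iff_of_nonneg (fun j _ => mul_nonneg (hq i j) (sq_nonneg _))).mp hi0 j
          (Finset.mem_univ j)
      have := mul_eq_zero.mp hij0
      rcases this with h' | h'
      · exact absurd h' (ne_of_gt hqij)
      · have := pow_eq_zero_iff (n := 2) (by norm_num) |>.mp h'
        linarith [sub_eq_zero.mp this]
    have hconst : ∀ i j : Fin n, w i = w j := by
      intro i j
      obtain ⟨L, f, hf0, hfL, hstep⟩ := hconn i j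
      have : ∀ l ≤ L, w i = w (f l) := by
        intro l hl
        induction l with
        | zero => rw [hf0]
        | succ m ih =>
          have hm := ih (by omega)
          rw [hm]
          exact hzero _ _ (hstep m (by omega))
      rw [← hfL]
      exact this L le_rfl
    have hw0 : ∀ k, w k = 0 := by
      intro k
      have hsum : ∑ l, w l = 0 := hwK.1
      have : ∑ l : Fin n, w k = 0 := by
        rw [← hsum]; apply Finset.sum_congr rfl; intro l _; exact hconst k l
      rw [Finset.sum_const, Finset.card_univ, Fintype.card_fin, nsmul_eq_mul] at this
      exact (mul_eq_zero.mp this).resolve_left (by exact_mod_cast (by omega : n ≠ 0))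
    have : (1:ℝ) = 0 := by
      rw [← hwK.2]
      apply Finset.sum_eq_zero; intro k _; simp [hw0 k]
    norm_num at this
  refine ⟨min lam0 1, lt_min hlam0pos one_pos, min_le_right _ _, ?_⟩
  intro u hu
  rcases eq_or_lt_of_le (Finset.sum_nonneg (fun k (_ : k ∈ Finset.univ) => sq_nonneg (u k))) with h | h
  · rw [← h, mul_zero]
    exact hQnonneg u
  · set t : ℝ := Real.sqrt (∑ k, (u k)^2) with ht
    have ht0 : 0 < t := Real.sqrt_pos.mpr h
    have ht2 : t^2 = ∑ k, (u k)^2 := Real.sq_sqrt h.le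
    set v : Fin n → ℝ := fun k => u k / t with hv
    have hvK : v ∈ K := by
      constructor
      · simp only [hv]
        rw [← Finset.sum_div, hu, zero_div]
      · simp only [hv, div_pow]
        rw [← Finset.sum_div, ← ht2, div_self (by positivity)]
    have hQv : Q u = t^2 * Q v := by
      simp only [hQ, Finset.mul_sum]
      apply Finset.sum_congr rfl; intro i _; apply Finset.sum_congr rfl; intro j _
      have : u i - u j = t * (v i - v j) := by
        simp only [hv]
        field_simp
      rw [this]
      ring
    have : lam0 ≤ Q v := hwmin hvK
    calc min lam0 1 * ∑ k, (u k)^2 ≤ lam0 * ∑ k, (u k)^2 := by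
          apply mul_le_mul_of_nonneg_right (min_le_left _ _) (by positivity)
      _ = lam0 * t^2 := by rw [ht2]
      _ ≤ Q v * t^2 := mul_le_mul_of_nonneg_right this (sq_nonneg t)
      _ = Q u := by rw [hQv]; ring


/-- Corollary 1: under Assumptions 1–3 and with no forceful agents
(`α_ij = 0` for all `i, j`), the beliefs of all agents converge with
probability one to the average of the initial beliefs. -/
theorem stmt_4 {n : ℕ} (hn : 2 ≤ n)
    (p α β γ : Fin n → Fin n → ℝ)
    (hp_diag : ∀ i, p i i = 0) (hp_nonneg : ∀ i j, 0 ≤ p i j) (hp_row : ∀ i, ∑ j, p i j = 1)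
    (hconn : ∀ i j : Fin n, ∃ L, isPath (fun a b => 0 < p a b) i j L)
    (hα : ∀ i j, 0 ≤ α i j) (hβ : ∀ i j, 0 ≤ β i j) (hγ : ∀ i j, 0 ≤ γ i j)
    (habg : ∀ i j, α i j + β i j + γ i j = 1)
    (hint : ∀ i j, 0 < p i j → 0 < β i j + α i j)
    (ε : ℝ) (hε0 : 0 < ε) (hε : ε ≤ 1 / 2)
    {Ω : Type*} [MeasureSpace Ω] [IsProbabilityMeasure (ℙ : Measure Ω)]
    (W : ℕ → Ω → Matrix (Fin n) (Fin n) ℝ)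
    (hWmeas : ∀ k, Measurable (W k))
    (hWlaw : ∀ k, Measure.map (W k) ℙ = lawW p α β γ ε)
    (hWindep : iIndepFun (m := fun _ => matMeas) W ℙ)
    (x0 : Fin n → ℝ) (x : ℕ → Ω → Fin n → ℝ)
    (hx0 : ∀ ω, x 0 ω = x0)
    (hxrec : ∀ k ω, x (k + 1) ω = (W k ω).mulVec (x k ω))
    -- no forceful agents
    (hnoforce : ∀ i j, α i j = 0) :
    ∀ᵐ ω ∂(ℙ : Measure Ω),
      ∀ i, Tendsto (fun k => x k ω i) atTop (nhds ((∑ j, x0 j) / n)) := by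
  classical
  set c : ℝ := (∑ j, x0 j) / n with hc
  have hnR : (0:ℝ) < n := by exact_mod_cast (by omega : 0 < n)
  -- measurability of x k
  have hxmeas : ∀ k, Measurable (x k) := by
    intro k
    induction k with
    | zero =>
      have : x 0 = fun _ => x0 := funext hx0
      rw [this]; exact measurable_const
    | succ m ih =>
      have : x (m+1) = (fun z : (Fin n → ℝ) × Matrix (Fin n) (Fin n) ℝ => z.2 *ᵥ z.1)
          ∘ (fun ω => (x m ω, W m ω)) := by
        funext ω; simp [hxrec]
      rw [this]
      exact measurable_mulVec_pair.comp (ih.prodMk (hWmeas m))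
  haveI hPW : IsProbabilityMeasure (lawW p α β γ ε) :=
    hWlaw 0 ▸ Measure.isProbabilityMeasure_map (hWmeas 0).aemeasurable
  -- the a.s. support event
  set S : Set (Matrix (Fin n) (Fin n) ℝ) := (⋃ i, ⋃ j, {Amat i j}) ∪ {1} with hS
  have hSmeas : MeasurableSet S :=
    (MeasurableSet.iUnion fun i => MeasurableSet.iUnion fun j =>
      measurableSet_singleton _).union (measurableSet_singleton _)
  have hlawS : lawW p α β γ ε Sᶜ = 0 := by
    have hterm : ∀ i j : Fin n,
        (ENNReal.ofReal (p i j * β i j / n) • Measure.dirac (Amat i j) +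
         ENNReal.ofReal (p i j * α i j / n) • Measure.dirac (Jmat ε i j) +
         ENNReal.ofReal (p i j * γ i j / n) •
           Measure.dirac (1 : Matrix (Fin n) (Fin n) ℝ)) Sᶜ = 0 := by
      intro i j
      have hA : Measure.dirac (Amat i j) Sᶜ = 0 := by
        rw [Measure.dirac_apply' _ hSmeas.compl]
        apply Set.indicator_of_notMem
        simp only [Set.mem_compl_iff, not_not, hS]
        exact Set.mem_union_left _ (Set.mem_iUnion.mpr ⟨i, Set.mem_iUnion.mpr ⟨j, rfl⟩⟩)
      have hI : Measure.dirac (1 : Matrix (Fin n) (Fin n) ℝ) Sᶜ = 0 := by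
        rw [Measure.dirac_apply' _ hSmeas.compl]
        apply Set.indicator_of_notMem
        simp only [Set.mem_compl_iff, not_not, hS]
        exact Set.mem_union_right _ rfl
      rw [Measure.add_apply, Measure.add_apply, Measure.smul_apply, Measure.smul_apply,
        Measure.smul_apply, hA, hI, hnoforce, mul_zero, zero_div, ENNReal.ofReal_zero]
      simp
    unfold lawW
    rw [Measure.finset_sum_apply]
    apply Finset.sum_eq_zero
    intro i _
    rw [Measure.finset_sum_apply]
    exact Finset.sum_eq_zero fun j _ => hterm i j
  have hWS : ∀ᵐ ω ∂(ℙ : Measure Ω), ∀ k, W k ω ∈ S := by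
    rw [ae_all_iff]
    intro k
    have h0 : (ℙ : Measure Ω) (W k ⁻¹' Sᶜ) = 0 := by
      rw [← Measure.map_apply (hWmeas k) hSmeas.compl, hWlaw k]
      exact hlawS
    exact measure_mono_null (fun ω hω => hω) h0
  -- sum preservation, per matrix
  have hMsum : ∀ M ∈ S, ∀ v : Fin n → ℝ, (∑ k, (M *ᵥ v) k) = ∑ k, v k := by
    intro M hM v
    rcases hM with hM | hM
    · simp only [Set.mem_iUnion, Set.mem_singleton_iff] at hM
      obtain ⟨i, j, rfl⟩ := hM
      exact sum_Amat_mulVec i j v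
    · rw [Set.mem_singleton_iff] at hM
      subst hM
      rw [Matrix.one_mulVec]
  have hsum_pres : ∀ᵐ ω ∂(ℙ : Measure Ω), ∀ k, ∑ l, x k ω l = ∑ l, x0 l := by
    filter_upwards [hWS] with ω hω
    intro k
    induction k with
    | zero => rw [hx0]
    | succ m ih =>
      rw [hxrec, hMsum _ (hω m) _]
      exact ih
  -- spectral gap
  have hbg : ∀ i j, β i j + γ i j = 1 := by
    intro i j; have := habg i j; rw [hnoforce i j] at this; linarith
  set q : Fin n → Fin n → ℝ := fun i j => p i j * β i j / (2*n) with hqdef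
  have hqnn : ∀ i j, 0 ≤ q i j := by
    intro i j
    exact div_nonneg (mul_nonneg (hp_nonneg i j) (hβ i j)) (by positivity)
  have hconn' : ∀ i j : Fin n, ∃ L, isPath (fun a b => 0 < q a b) i j L := by
    intro i j
    obtain ⟨L, f, h0, hL, hs⟩ := hconn i j
    refine ⟨L, f, h0, hL, fun l hl => ?_⟩
    have hp' := hs l hl
    have hβ' : 0 < β (f l) (f (l+1)) := by
      have := hint _ _ hp'; rw [hnoforce] at this; linarith
    have : 0 < p (f l) (f (l+1)) * β (f l) (f (l+1)) := mul_pos hp' hβ'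
    simp only [hqdef]
    positivity
  obtain ⟨lam, hlam0, hlam1, hgap⟩ := gap_lemma hn q hqnn hconn'
  -- the key real inequality
  have hkey : ∀ v : Fin n → ℝ, (∑ l, v l) = ∑ l, x0 l →
      Vfun c v - (∑ i, ∑ j, q i j * (v i - v j)^2) ≤ (1 - lam) * Vfun c v := by
    intro v hv
    have hu : (∑ k, (v k - c)) = 0 := by
      rw [Finset.sum_sub_distrib, hv, Finset.sum_const, Finset.card_univ, Fintype.card_fin,
        nsmul_eq_mul, hc]
      field_simp
      ring
    have hg := hgap (fun k => v k - c) hu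
    have heq : ∀ i j : Fin n, ((v i - c) - (v j - c)) = v i - v j := fun i j => by ring
    simp only [heq] at hg
    unfold Vfun
    linarith [hg]
  -- the inner lintegral over the law of W
  have hfmeasv : ∀ v : Fin n → ℝ,
      Measurable (fun M : Matrix (Fin n) (Fin n) ℝ => ENNReal.ofReal (Vfun c (M *ᵥ v))) := by
    intro v
    apply ENNReal.measurable_ofReal.comp
    apply (Vfun_measurable c).comp
    have : (fun M : Matrix (Fin n) (Fin n) ℝ => M *ᵥ v)
        = (fun z : (Fin n → ℝ) × Matrix (Fin n) (Fin n) ℝ => z.2 *ᵥ z.1)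
          ∘ (fun M => (v, M)) := rfl
    rw [this]
    exact measurable_mulVec_pair.comp (measurable_const.prodMk measurable_id)
  have hinner : ∀ v : Fin n → ℝ, (∑ l, v l) = ∑ l, x0 l →
      ∫⁻ M, ENNReal.ofReal (Vfun c (M *ᵥ v)) ∂(lawW p α β γ ε)
        ≤ ENNReal.ofReal ((1 - lam) * Vfun c v) := by
    intro v hv
    have hstep1 : ∫⁻ M, ENNReal.ofReal (Vfun c (M *ᵥ v)) ∂(lawW p α β γ ε)
        = ∑ i, ∑ j, (ENNReal.ofReal (p i j * β i j / n)
              * ENNReal.ofReal (Vfun c (Amat i j *ᵥ v))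
            + ENNReal.ofReal (p i j * γ i j / n) * ENNReal.ofReal (Vfun c v)) := by
      unfold lawW
      rw [lintegral_finset_sum_measure]
      apply Finset.sum_congr rfl
      intro i _
      rw [lintegral_finset_sum_measure]
      apply Finset.sum_congr rfl
      intro j _
      rw [lintegral_add_measure, lintegral_add_measure, lintegral_smul_measure,
        lintegral_smul_measure, lintegral_smul_measure,
        lintegral_dirac' _ (hfmeasv v), lintegral_dirac' _ (hfmeasv v),
        lintegral_dirac' _ (hfmeasv v)]
      rw [hnoforce, mul_zero, zero_div, ENNReal.ofReal_zero, zero_smul, add_zero,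
        Matrix.one_mulVec, smul_eq_mul, smul_eq_mul]
    rw [hstep1]
    have hstep2 : ∀ i j : Fin n,
        ENNReal.ofReal (p i j * β i j / n) * ENNReal.ofReal (Vfun c (Amat i j *ᵥ v))
          + ENNReal.ofReal (p i j * γ i j / n) * ENNReal.ofReal (Vfun c v)
        = ENNReal.ofReal ((p i j * β i j / n) * (Vfun c (Amat i j *ᵥ v))
            + (p i j * γ i j / n) * (Vfun c v)) := by
      intro i j
      rw [← ENNReal.ofReal_mul (div_nonneg (mul_nonneg (hp_nonneg i j) (hβ i j)) hnR.le),
        ← ENNReal.ofReal_mul (div_nonneg (mul_nonneg (hp_nonneg i j) (hγ i j)) hnR.le),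
        ← ENNReal.ofReal_add
          (mul_nonneg (div_nonneg (mul_nonneg (hp_nonneg i j) (hβ i j)) hnR.le)
            (Vfun_nonneg _ _))
          (mul_nonneg (div_nonneg (mul_nonneg (hp_nonneg i j) (hγ i j)) hnR.le)
            (Vfun_nonneg _ _))]
    simp only [hstep2]
    have hnn2 : ∀ i j : Fin n, 0 ≤ (p i j * β i j / n) * (Vfun c (Amat i j *ᵥ v))
        + (p i j * γ i j / n) * (Vfun c v) := by
      intro i j
      have := Vfun_nonneg c (Amat i j *ᵥ v)
      have := Vfun_nonneg c v
      have h1 : 0 ≤ p i j * β i j / n := div_nonneg (mul_nonneg (hp_nonneg i j) (hβ i j)) hnR.le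
      have h2 : 0 ≤ p i j * γ i j / n := div_nonneg (mul_nonneg (hp_nonneg i j) (hγ i j)) hnR.le
      positivity
    have hcollect : ∑ i, ∑ j, ENNReal.ofReal ((p i j * β i j / n) * (Vfun c (Amat i j *ᵥ v))
            + (p i j * γ i j / n) * (Vfun c v))
        = ENNReal.ofReal (∑ i, ∑ j, ((p i j * β i j / n) * (Vfun c (Amat i j *ᵥ v))
            + (p i j * γ i j / n) * (Vfun c v))) := by
      rw [ENNReal.ofReal_sum_of_nonneg (fun i _ => Finset.sum_nonneg fun j _ => hnn2 i j)]
      exact Finset.sum_congr rfl fun i _ =>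
        (ENNReal.ofReal_sum_of_nonneg (fun j _ => hnn2 i j)).symm
    rw [hcollect]
    apply ENNReal.ofReal_le_ofReal
    have hterm3 : ∀ i j : Fin n, (p i j * β i j / n) * (Vfun c (Amat i j *ᵥ v))
        + (p i j * γ i j / n) * (Vfun c v)
        = (p i j / n) * Vfun c v - q i j * (v i - v j)^2 := by
      intro i j
      rw [Vfun_Amat]
      simp only [hqdef]
      linear_combination (p i j * Vfun c v / n) * hbg i j
    simp only [hterm3]
    have hsplit : ∑ i, ∑ j, ((p i j / n) * Vfun c v - q i j * (v i - v j)^2)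
        = (∑ i : Fin n, ∑ j : Fin n, p i j / n) * Vfun c v
          - ∑ i, ∑ j, q i j * (v i - v j)^2 := by
      simp only [Finset.sum_sub_distrib]
      congr 1
      rw [Finset.sum_mul]
      exact Finset.sum_congr rfl fun i _ => by rw [Finset.sum_mul]
    rw [hsplit]
    have hsum1 : ∑ i : Fin n, ∑ j : Fin n, p i j / n = 1 := by
      have h1 : ∀ i : Fin n, ∑ j, p i j / n = 1/n := by
        intro i; rw [← Finset.sum_div, hp_row]
      simp only [h1]
      rw [Finset.sum_const, Finset.card_univ, Fintype.card_fin, nsmul_eq_mul]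
      field_simp
    rw [hsum1, one_mul]
    exact hkey v hv
  -- x k as a function of W 0, ..., W (k-1)
  have hxiter : ∀ m (ω : Ω), x m ω = iterProd x0 (fun i => W i ω) m := by
    intro m ω
    induction m with
    | zero => rw [hx0]; rfl
    | succ l ih => rw [hxrec, ih]; rfl
  -- independence of x k and W k
  have hindep : ∀ k, IndepFun (x k) (W k) (ℙ : Measure Ω) := by
    intro k
    have hST : Disjoint (Finset.range k) ({k} : Finset ℕ) := by simp
    have h := hWindep.indepFun_finset (Finset.range k) {k} hST hWmeas
    set φ : ((i : (Finset.range k : Finset ℕ)) → Matrix (Fin n) (Fin n) ℝ) → (Fin n → ℝ) :=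
      fun v => iterProd x0 (fun i => if h : i ∈ Finset.range k then v ⟨i, h⟩ else 1) k with hφ
    set ψ : ((i : ({k} : Finset ℕ)) → Matrix (Fin n) (Fin n) ℝ) → Matrix (Fin n) (Fin n) ℝ :=
      fun v => v ⟨k, Finset.mem_singleton_self k⟩ with hψ
    have hφm : Measurable φ := by
      apply (measurable_iterProd x0 k).comp
      apply measurable_pi_lambda
      intro i
      by_cases hi : i ∈ Finset.range k
      · simpa [hi] using measurable_pi_apply (⟨i, hi⟩ : (Finset.range k : Finset ℕ))
      · simpa [hi] using
          (measurable_const :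
            Measurable fun _ : (i : (Finset.range k : Finset ℕ)) → Matrix (Fin n) (Fin n) ℝ =>
              (1 : Matrix (Fin n) (Fin n) ℝ))
    have hψm : Measurable ψ := measurable_pi_apply _
    have h2 := h.comp hφm hψm
    have e1 : φ ∘ (fun ω (i : (Finset.range k : Finset ℕ)) => W i ω) = x k := by
      funext ω
      show iterProd x0 (fun i => if h : i ∈ Finset.range k then W i ω else 1) k = x k ω
      rw [hxiter k ω]
      apply iterProd_congr
      intro i hi
      simp [Finset.mem_range.mpr hi]
    have e2 : ψ ∘ (fun ω (i : (({k} : Finset ℕ) : Finset ℕ)) => W i ω) = W k := rfl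
    rw [e1, e2] at h2
    exact h2
  have hprodlaw : ∀ k, Measure.map (fun ω => (x k ω, W k ω)) (ℙ : Measure Ω)
      = (Measure.map (x k) (ℙ : Measure Ω)).prod (lawW p α β γ ε) := by
    intro k
    rw [← hWlaw k]
    exact (indepFun_iff_map_prod_eq_prod_map_map (hxmeas k).aemeasurable
      (hWmeas k).aemeasurable).mp (hindep k)
  -- the contraction step
  set ℓ : ℕ → ENNReal := fun k => ∫⁻ ω, ENNReal.ofReal (Vfun c (x k ω)) ∂(ℙ : Measure Ω) with hℓ
  have hFmeas : Measurable (fun z : (Fin n → ℝ) × Matrix (Fin n) (Fin n) ℝ =>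
      ENNReal.ofReal (Vfun c (z.2 *ᵥ z.1))) :=
    ((Vfun_measurable c).comp measurable_mulVec_pair).ennreal_ofReal
  have hstep : ∀ k, ℓ (k+1) ≤ ENNReal.ofReal (1 - lam) * ℓ k := by
    intro k
    have hμkB : ∀ᵐ v ∂(Measure.map (x k) (ℙ : Measure Ω)), (∑ l, v l) = ∑ l, x0 l := by
      rw [ae_map_iff (hxmeas k).aemeasurable
        (measurableSet_eq_fun (Finset.measurable_sum _ fun l _ => measurable_pi_apply l)
          measurable_const)]
      filter_upwards [hsum_pres] with ω hω using hω k
    calc ℓ (k+1) = ∫⁻ ω, ENNReal.ofReal (Vfun c ((W k ω) *ᵥ (x k ω))) ∂(ℙ : Measure Ω) := by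
          simp only [hℓ, hxrec]
      _ = ∫⁻ z : (Fin n → ℝ) × Matrix (Fin n) (Fin n) ℝ,
            ENNReal.ofReal (Vfun c (z.2 *ᵥ z.1))
            ∂(Measure.map (fun ω => (x k ω, W k ω)) (ℙ : Measure Ω)) := by
          rw [lintegral_map hFmeas ((hxmeas k).prodMk (hWmeas k))]
      _ = ∫⁻ z : (Fin n → ℝ) × Matrix (Fin n) (Fin n) ℝ,
            ENNReal.ofReal (Vfun c (z.2 *ᵥ z.1))
            ∂((Measure.map (x k) (ℙ : Measure Ω)).prod (lawW p α β γ ε)) := by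
          rw [hprodlaw k]
      _ = ∫⁻ v, ∫⁻ M, ENNReal.ofReal (Vfun c (M *ᵥ v)) ∂(lawW p α β γ ε)
            ∂(Measure.map (x k) (ℙ : Measure Ω)) :=
          lintegral_prod _ hFmeas.aemeasurable
      _ ≤ ∫⁻ v, ENNReal.ofReal ((1 - lam) * Vfun c v) ∂(Measure.map (x k) (ℙ : Measure Ω)) := by
          apply lintegral_mono_ae
          filter_upwards [hμkB] with v hv
          exact hinner v hv
      _ = ∫⁻ v, ENNReal.ofReal (1 - lam) * ENNReal.ofReal (Vfun c v)
            ∂(Measure.map (x k) (ℙ : Measure Ω)) := by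
          congr 1
          funext v
          rw [ENNReal.ofReal_mul (by linarith)]
      _ = ENNReal.ofReal (1 - lam)
            * ∫⁻ v, ENNReal.ofReal (Vfun c v) ∂(Measure.map (x k) (ℙ : Measure Ω)) :=
          lintegral_const_mul _ (Vfun_measurable c).ennreal_ofReal
      _ = ENNReal.ofReal (1 - lam) * ℓ k := by
          rw [lintegral_map (Vfun_measurable c).ennreal_ofReal (hxmeas k)]
  -- geometric decay
  have hgeom : ∀ k, ℓ k ≤ (ENNReal.ofReal (1 - lam))^k * ENNReal.ofReal (Vfun c x0) := by
    intro k
    induction k with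
    | zero =>
      have : ℓ 0 = ENNReal.ofReal (Vfun c x0) := by
        simp only [hℓ, hx0]
        rw [lintegral_const]
        simp
      rw [this]
      simp
    | succ m ih =>
      calc ℓ (m+1) ≤ ENNReal.ofReal (1 - lam) * ℓ m := hstep m
        _ ≤ ENNReal.ofReal (1 - lam)
            * ((ENNReal.ofReal (1 - lam))^m * ENNReal.ofReal (Vfun c x0)) :=
          mul_le_mul_right ih _
        _ = (ENNReal.ofReal (1 - lam))^(m+1) * ENNReal.ofReal (Vfun c x0) := by ring
  have hr1 : ENNReal.ofReal (1 - lam) < 1 := by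
    rw [← ENNReal.ofReal_one]
    exact ENNReal.ofReal_lt_ofReal_iff_of_nonneg (by linarith) |>.mpr (by linarith)
  have htsum : ∑' k, ℓ k ≠ ⊤ := by
    have hle : ∑' k, ℓ k
        ≤ ∑' k, (ENNReal.ofReal (1 - lam))^k * ENNReal.ofReal (Vfun c x0) :=
      ENNReal.tsum_le_tsum hgeom
    rw [ENNReal.tsum_mul_right, ENNReal.tsum_geometric] at hle
    refine ne_top_of_le_ne_top (ENNReal.mul_ne_top ?_ ENNReal.ofReal_ne_top) hle
    exact ENNReal.inv_ne_top.mpr (tsub_pos_of_lt hr1).ne'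
  have hxVmeas : ∀ k, Measurable fun ω => ENNReal.ofReal (Vfun c (x k ω)) := fun k =>
    ((Vfun_measurable c).comp (hxmeas k)).ennreal_ofReal
  have hae : ∀ᵐ ω ∂(ℙ : Measure Ω), (∑' k, ENNReal.ofReal (Vfun c (x k ω))) < ⊤ := by
    apply ae_lt_top (Measurable.ennreal_tsum hxVmeas)
    rw [lintegral_tsum fun k => (hxVmeas k).aemeasurable]
    exact htsum
  -- conclusion
  filter_upwards [hae] with ω hω
  intro i
  have h0 : Tendsto (fun k => ENNReal.ofReal (Vfun c (x k ω))) atTop (nhds 0) :=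
    ENNReal.tendsto_atTop_zero_of_tsum_ne_top hω.ne
  have hV0 : Tendsto (fun k => Vfun c (x k ω)) atTop (nhds 0) := by
    have h1 := (ENNReal.tendsto_toReal (by norm_num : (0:ENNReal) ≠ ⊤)).comp h0
    have h2 : (fun k => (ENNReal.ofReal (Vfun c (x k ω))).toReal)
        = fun k => Vfun c (x k ω) :=
      funext fun k => ENNReal.toReal_ofReal (Vfun_nonneg _ _)
    rw [show ENNReal.toReal ∘ (fun k => ENNReal.ofReal (Vfun c (x k ω)))
        = fun k => (ENNReal.ofReal (Vfun c (x k ω))).toReal from rfl, h2] at h1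
    simpa using h1
  have hsqrt : Tendsto (fun k => Real.sqrt (Vfun c (x k ω))) atTop (nhds 0) := by
    have := (Real.continuous_sqrt.tendsto 0).comp hV0
    simpa [Function.comp_def] using this
  have habs : Tendsto (fun k => |x k ω i - c|) atTop (nhds 0) := by
    apply squeeze_zero (fun k => abs_nonneg _) (fun k => ?_) hsqrt
    rw [← Real.sqrt_sq_eq_abs]
    apply Real.sqrt_le_sqrt
    exact Finset.single_le_sum (f := fun l => (x k ω l - c)^2)
      (fun l _ => sq_nonneg _) (Finset.mem_univ i)
  rw [tendsto_iff_dist_tendsto_zero]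
  simpa [Real.dist_eq] using habs
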